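/- With the notation of the previous composition rule, the commutator of two integral operators a∂⁻¹b and c∂⁻¹d has no differential part and is given explicitly by: for all continuous f and all x, [a∂⁻¹b, c∂⁻¹d]f(x) = a(x)G(x)·∫₀ˣ d f − a(x)·∫₀ˣ G d f − c(x)H(x)·∫₀ˣ b f + c(x)·∫₀ˣ H b f, where G(x) = ∫₀ˣ b c and H(x) = ∫₀ˣ d a. -/

import Mathlib

lemma integral_op_aux (g h : ℝ → ℝ) (hg : Continuous g) (hh : Continuous h) (x : ℝ) :
    (∫ y in (0:ℝ)..x, g y * ∫ z in (0:ℝ)..y, h z)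
      = (∫ y in (0:ℝ)..x, g y) * (∫ y in (0:ℝ)..x, h y)
        - ∫ y in (0:ℝ)..x, (∫ z in (0:ℝ)..y, g z) * h y := by
  have hu : ∀ y ∈ Set.uIcc (0:ℝ) x, HasDerivAt (fun t => ∫ z in (0:ℝ)..t, g z) (g y) y := by
    intro y _
    exact intervalIntegral.integral_hasDerivAt_right (hg.intervalIntegrable _ _)
      (hg.stronglyMeasurableAtFilter _ _) hg.continuousAt
  have hv : ∀ y ∈ Set.uIcc (0:ℝ) x, HasDerivAt (fun t => ∫ z in (0:ℝ)..t, h z) (h y) y := by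
    intro y _
    exact intervalIntegral.integral_hasDerivAt_right (hh.intervalIntegrable _ _)
      (hh.stronglyMeasurableAtFilter _ _) hh.continuousAt
  have key := intervalIntegral.integral_mul_deriv_eq_deriv_mul hu hv
    (hg.intervalIntegrable 0 x) (hh.intervalIntegrable 0 x)
  simp only [intervalIntegral.integral_same, zero_mul, mul_zero, sub_zero] at key
  -- key : ∫ (∫₀ʸ g) * h = (∫₀ˣ g)(∫₀ˣ h) - ∫ g * (∫₀ʸ h)
  linarith [key]

theorem integral_op_commutator
    (a b c d f : ℝ → ℝ)
    (ha : Continuous a) (hb : Continuous b) (hc : Continuous c)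
    (hd : Continuous d) (hf : Continuous f) :
    ∀ x : ℝ,
      (a x * ∫ y in (0:ℝ)..x, b y * (c y * ∫ z in (0:ℝ)..y, d z * f z))
      - (c x * ∫ y in (0:ℝ)..x, d y * (a y * ∫ z in (0:ℝ)..y, b z * f z))
      = a x * (∫ y in (0:ℝ)..x, b y * c y) * (∫ y in (0:ℝ)..x, d y * f y)
        - a x * (∫ y in (0:ℝ)..x, (∫ z in (0:ℝ)..y, b z * c z) * (d y * f y))
        - c x * (∫ y in (0:ℝ)..x, d y * a y) * (∫ y in (0:ℝ)..x, b y * f y)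
        + c x * (∫ y in (0:ℝ)..x, (∫ z in (0:ℝ)..y, d z * a z) * (b y * f y)) := by
  intro x
  have h1 : (∫ y in (0:ℝ)..x, b y * (c y * ∫ z in (0:ℝ)..y, d z * f z))
      = ∫ y in (0:ℝ)..x, (fun t => b t * c t) y * ∫ z in (0:ℝ)..y, (fun t => d t * f t) z := by
    simp only [mul_assoc]
  have h2 : (∫ y in (0:ℝ)..x, d y * (a y * ∫ z in (0:ℝ)..y, b z * f z))
      = ∫ y in (0:ℝ)..x, (fun t => d t * a t) y * ∫ z in (0:ℝ)..y, (fun t => b t * f t) z := by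
    congr 1; ext y; ring
  rw [h1, h2, integral_op_aux (fun t => b t * c t) (fun t => d t * f t) (hb.mul hc) (hd.mul hf) x,
    integral_op_aux (fun t => d t * a t) (fun t => b t * f t) (hd.mul ha) (hb.mul hf) x]
  ring
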